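/- Define the worst-case variance ratio ν²(θ) = v(θ)/σ² + 1, where v(θ) is the unique positive root of p_θ. Then ν²(θ) > 1 for all θ > 0, ν²(θ) → 1 as θ → ∞, and ν²(θ) → ∞ as θ → 0⁺. -/

import Mathlib

set_option maxHeartbeats 1000000

private lemma sqrtAtTop' : Filter.Tendsto Real.sqrt Filter.atTop Filter.atTop := by
  rw [Filter.tendsto_atTop]
  intro b
  filter_upwards [Filter.eventually_ge_atTop (b ^ 2)] with x hx
  calc b ≤ |b| := le_abs_self b
  _ = Real.sqrt (b ^ 2) := (Real.sqrt_sq_eq_abs b).symm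
  _ ≤ Real.sqrt x := Real.sqrt_le_sqrt hx

/-- The worst-case variance ratio `ν²(θ) = v(θ)/σ² + 1` satisfies `ν²(θ) > 1`
for all `θ > 0`, `ν²(θ) → 1` as `θ → ∞`, and `ν²(θ) → ∞` as `θ → 0⁺`. -/
theorem stmt_5 (μ σ C : ℝ) (hσ : 0 < σ) (hμ : μ ≠ 0) (hC : C ≠ 0) (v : ℝ → ℝ)
    (hroot : ∀ θ ∈ Set.Ioi (0 : ℝ), 0 < v θ ∧
      (θ / (2 * σ ^ 2)) * (v θ) ^ 3 + (θ / σ ^ 2) * (μ ^ 2 + σ ^ 2) * (v θ) ^ 2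
        + ((θ / (2 * σ ^ 2)) * (μ ^ 2 + σ ^ 2) ^ 2 - (1 / 2) * μ ^ 2 * C ^ 2) * v θ
        - (1 / 2) * μ ^ 2 * C ^ 2 = 0)
    (huniq : ∀ θ ∈ Set.Ioi (0 : ℝ), ∀ w : ℝ, 0 < w →
      (θ / (2 * σ ^ 2)) * w ^ 3 + (θ / σ ^ 2) * (μ ^ 2 + σ ^ 2) * w ^ 2
        + ((θ / (2 * σ ^ 2)) * (μ ^ 2 + σ ^ 2) ^ 2 - (1 / 2) * μ ^ 2 * C ^ 2) * w
        - (1 / 2) * μ ^ 2 * C ^ 2 = 0 → w = v θ)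
    (ν2 : ℝ → ℝ) (hν2 : ∀ θ, ν2 θ = v θ / σ ^ 2 + 1) :
    (∀ θ ∈ Set.Ioi (0 : ℝ), 1 < ν2 θ) ∧
    Filter.Tendsto ν2 Filter.atTop (nhds 1) ∧
    Filter.Tendsto ν2 (nhdsWithin 0 (Set.Ioi 0)) Filter.atTop := by
  set A : ℝ := μ ^ 2 + σ ^ 2 with hAdef
  set K : ℝ := σ ^ 2 * μ ^ 2 * C ^ 2 with hKdef
  have hσ2 : (0:ℝ) < σ ^ 2 := by positivity
  have hA : 0 < A := by positivity
  have hK : 0 < K := by positivity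
  have key : ∀ θ ∈ Set.Ioi (0 : ℝ), θ * v θ * (v θ + A) ^ 2 = K * (v θ + 1) := by
    intro θ hθ
    obtain ⟨hv, heq⟩ := hroot θ hθ
    have h2 : (2 * σ ^ 2) ≠ 0 := by positivity
    field_simp at heq
    have h8 : (8:ℝ) * σ ^ 4 ≠ 0 := by positivity
    have hz : 8 * σ ^ 4 * (θ * v θ * (v θ + A) ^ 2 - K * (v θ + 1)) = 0 := by
      linear_combination (8 * σ ^ 4) * heq
    have := (mul_eq_zero.mp hz).resolve_left h8
    linarith
  refine ⟨?_, ?_, ?_⟩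
  · intro θ hθ
    have hv := (hroot θ hθ).1
    rw [hν2]
    have : 0 < v θ / σ ^ 2 := by positivity
    linarith
  · -- v θ → 0 at top
    have hvsmall : ∀ θ, max 1 (2 * K / A ^ 2) < θ → v θ ≤ 2 * K / A ^ 2 / θ := by
      intro θ hθ'
      have hθ1 : 1 < θ := lt_of_le_of_lt (le_max_left _ _) hθ'
      have hθK : 2 * K / A ^ 2 < θ := lt_of_le_of_lt (le_max_right _ _) hθ'
      have hθ0 : 0 < θ := by linarith
      obtain ⟨hv, -⟩ := hroot θ hθ0
      have hk := key θ hθ0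
      have hA2θ : 2 * K < θ * A ^ 2 := by
        rw [div_lt_iff₀ (by positivity)] at hθK
        linarith [hθK]
      have hvlt1 : v θ < 1 := by
        by_contra h
        push_neg at h
        have h1 : θ * v θ * A ^ 2 ≤ θ * v θ * (v θ + A) ^ 2 := by
          have : A ^ 2 ≤ (v θ + A) ^ 2 := by nlinarith
          nlinarith [mul_pos hθ0 hv]
        have h2 : K * (v θ + 1) ≤ 2 * K * v θ := by nlinarith
        nlinarith [mul_pos hθ0 hv]
      -- θ v A² ≤ K(v+1) < 2K
      have h1 : θ * v θ * A ^ 2 ≤ K * (v θ + 1) := by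
        have : A ^ 2 ≤ (v θ + A) ^ 2 := by nlinarith
        nlinarith [mul_pos hθ0 hv]
      have h2 : K * (v θ + 1) < 2 * K := by nlinarith
      rw [div_div, le_div_iff₀ (by positivity)]
      nlinarith
    have hv0 : Filter.Tendsto v Filter.atTop (nhds 0) := by
      apply tendsto_of_tendsto_of_tendsto_of_le_of_le'
        (g := fun _ => (0:ℝ)) (h := fun θ => 2 * K / A ^ 2 / θ)
        tendsto_const_nhds
        (Filter.Tendsto.div_atTop tendsto_const_nhds Filter.tendsto_id)
      · filter_upwards [Filter.eventually_gt_atTop (0:ℝ)] with θ hθ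
        exact (hroot θ hθ).1.le
      · filter_upwards [Filter.eventually_gt_atTop (max 1 (2 * K / A ^ 2))] with θ hθ
        exact hvsmall θ hθ
    have : Filter.Tendsto (fun θ => v θ / σ ^ 2 + 1) Filter.atTop (nhds 1) := by
      have := (hv0.div_const (σ ^ 2)).add (tendsto_const_nhds (x := (1:ℝ)))
      simpa using this
    exact this.congr fun θ => (hν2 θ).symm
  · -- ν2 → ∞ as θ → 0+
    have hlow : ∀ θ ∈ Set.Ioi (0:ℝ), Real.sqrt (K / θ) - A ≤ v θ := by
      intro θ hθ
      have hθ0 : (0:ℝ) < θ := hθ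
      obtain ⟨hv, -⟩ := hroot θ hθ
      have hk := key θ hθ
      have h1 : K ≤ θ * (v θ + A) ^ 2 := by
        have : K * v θ ≤ θ * v θ * (v θ + A) ^ 2 := by nlinarith
        have h2 : K * v θ ≤ (θ * (v θ + A) ^ 2) * v θ := by nlinarith
        exact le_of_mul_le_mul_right (by linarith [h2]) hv
      have h3 : K / θ ≤ (v θ + A) ^ 2 := by
        rw [div_le_iff₀ hθ0]; nlinarith
      have h4 : Real.sqrt (K / θ) ≤ v θ + A := by
        calc Real.sqrt (K / θ) ≤ Real.sqrt ((v θ + A) ^ 2) := Real.sqrt_le_sqrt h3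
        _ = v θ + A := by rw [Real.sqrt_sq (by positivity)]
      linarith
    have hsq : Filter.Tendsto (fun θ => (Real.sqrt (K / θ) - A) / σ ^ 2 + 1)
        (nhdsWithin 0 (Set.Ioi 0)) Filter.atTop := by
      have h1 : Filter.Tendsto (fun θ : ℝ => K / θ) (nhdsWithin 0 (Set.Ioi 0))
          Filter.atTop := by
        have := tendsto_inv_nhdsGT_zero.const_mul_atTop hK
        simpa [div_eq_mul_inv] using this
      have h2 := (sqrtAtTop'.comp h1).atTop_add
        (tendsto_const_nhds (x := -A))
      have h3 := (h2.atTop_div_const hσ2).atTop_add (tendsto_const_nhds (x := (1:ℝ)))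
      refine h3.congr fun θ => ?_
      simp [Function.comp, sub_eq_add_neg]
    apply Filter.tendsto_atTop_mono' _ _ hsq
    filter_upwards [self_mem_nhdsWithin] with θ hθ
    rw [hν2]
    have h := hlow θ hθ
    gcongr
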